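/- Suppose u : [0,∞) → ℝ is continuously differentiable with u(0) = u₀ ∈ (0,1), κ > 0, and κ u'(t) = u(t)(1 - u(t) - ∫_0^t u(x) dx) for all t ≥ 0. Then u(t) < 1 for all t ≥ 0. -/

import Mathlib

open Set Filter Topology intervalIntegral

theorem volterra_lt_one (u : ℝ → ℝ) (κ u₀ : ℝ) (hκ : 0 < κ)
    (hu₀ : u₀ ∈ Set.Ioo (0:ℝ) 1)
    (hC1 : ContDiffOn ℝ 1 u (Set.Ici 0)) (h0 : u 0 = u₀)
    (hode : ∀ t : ℝ, 0 ≤ t → ∃ d : ℝ, HasDerivAt u d t ∧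
      κ * d = u t * (1 - u t - ∫ x in (0:ℝ)..t, u x)) :
    ∀ t : ℝ, 0 ≤ t → u t < 1 := by
  have hκ' : κ ≠ 0 := ne_of_gt hκ
  have hcontAt : ∀ t : ℝ, 0 ≤ t → ContinuousAt u t := fun t ht =>
    (hode t ht).choose_spec.1.continuousAt
  have hu_cont : ContinuousOn u (Ici 0) := fun t ht => (hcontAt t ht).continuousWithinAt
  set F : ℝ → ℝ := fun t => ∫ x in (0:ℝ)..t, u x with hFdef
  have hFint : ∀ t : ℝ, 0 ≤ t → IntervalIntegrable u MeasureTheory.volume 0 t := by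
    intro t ht
    exact (hu_cont.mono (by rw [uIcc_of_le ht]; exact Icc_subset_Ici_self)).intervalIntegrable
  have hF : ∀ t : ℝ, 0 ≤ t → HasDerivWithinAt F (u t) (Ici t) t := by
    intro t ht
    exact integral_hasDerivWithinAt_right (s := Ici t) (t := Ioi t) (hFint t ht)
      ⟨Ici 0, mem_of_superset self_mem_nhdsWithin (fun x hx => le_trans ht (le_of_lt hx)),
        hu_cont.aestronglyMeasurable measurableSet_Ici⟩
      (hcontAt t ht).continuousWithinAt
  have hF' : ∀ t : ℝ, 0 < t → HasDerivAt F (u t) t := by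
    intro t ht
    refine integral_hasDerivAt_right (hFint t ht.le)
      ⟨Ioi 0, Ioi_mem_nhds ht, ?_⟩ (hcontAt t ht.le)
    exact (hu_cont.mono Ioi_subset_Ici_self).aestronglyMeasurable measurableSet_Ioi
  have hFc : ContinuousOn F (Ici 0) := by
    intro t ht
    rcases eq_or_lt_of_le (mem_Ici.1 ht) with h | h
    · exact h ▸ (hF 0 le_rfl).continuousWithinAt
    · exact (hF' t h).continuousAt.continuousWithinAt
  set g : ℝ → ℝ := fun t => (1 - u t - F t) / κ with hgdef
  have hg_cont : ContinuousOn g (Ici 0) :=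
    ((continuousOn_const.sub hu_cont).sub hFc).div_const κ
  have hg_contAt : ∀ t : ℝ, 0 < t → ContinuousAt g t := by
    intro t ht
    exact ((continuousAt_const.sub (hcontAt t ht.le)).sub (hF' t ht).continuousAt).div_const κ
  set G : ℝ → ℝ := fun t => ∫ x in (0:ℝ)..t, g x with hGdef
  have hGint : ∀ t : ℝ, 0 ≤ t → IntervalIntegrable g MeasureTheory.volume 0 t := by
    intro t ht
    exact (hg_cont.mono (by rw [uIcc_of_le ht]; exact Icc_subset_Ici_self)).intervalIntegrable
  have hG : ∀ t : ℝ, 0 ≤ t → HasDerivWithinAt G (g t) (Ici t) t := by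
    intro t ht
    exact integral_hasDerivWithinAt_right (s := Ici t) (t := Ioi t) (hGint t ht)
      ⟨Ici 0, mem_of_superset self_mem_nhdsWithin (fun x hx => le_trans ht (le_of_lt hx)),
        hg_cont.aestronglyMeasurable measurableSet_Ici⟩
      ((hg_cont t ht).mono (fun x hx => le_trans ht (le_of_lt hx)))
  have hG' : ∀ t : ℝ, 0 < t → HasDerivAt G (g t) t := by
    intro t ht
    refine integral_hasDerivAt_right (hGint t ht.le)
      ⟨Ioi 0, Ioi_mem_nhds ht, ?_⟩ (hg_contAt t ht)
    exact (hg_cont.mono Ioi_subset_Ici_self).aestronglyMeasurable measurableSet_Ioi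
  have hGc : ContinuousOn G (Ici 0) := by
    intro t ht
    rcases eq_or_lt_of_le (mem_Ici.1 ht) with h | h
    · exact h ▸ (hG 0 le_rfl).continuousWithinAt
    · exact (hG' t h).continuousAt.continuousWithinAt
  -- the derivative value of u at t ≥ 0 is u t * g t
  have hu_deriv : ∀ t : ℝ, 0 ≤ t → HasDerivAt u (u t * g t) t := by
    intro t ht
    obtain ⟨d, hd, heq⟩ := hode t ht
    have hFt : F t = ∫ x in (0:ℝ)..t, u x := rfl
    have hgt : g t = (1 - u t - F t) / κ := rfl
    have : d = u t * g t := by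
      rw [hgt, hFt]
      field_simp
      linarith [heq]
    rwa [← this]
  -- v = u * exp (-G) has zero right derivative on [0, ∞)
  set v : ℝ → ℝ := fun t => u t * Real.exp (-G t) with hvdef
  have hv : ∀ t : ℝ, 0 ≤ t → HasDerivWithinAt v 0 (Ici t) t := by
    intro t ht
    have h1 : HasDerivWithinAt (fun s => Real.exp (-G s))
        (Real.exp (-G t) * (-(g t))) (Ici t) t := ((hG t ht).neg).exp
    have h2 := ((hu_deriv t ht).hasDerivWithinAt (s := Ici t)).mul h1
    have h3 : u t * g t * Real.exp (-G t) + u t * (Real.exp (-G t) * (-(g t))) = 0 := by ring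
    rwa [h3] at h2
  have hv_cont : ContinuousOn v (Ici 0) :=
    hu_cont.mul (Real.continuous_exp.comp_continuousOn hGc.neg)
  have hv_const : ∀ t : ℝ, 0 ≤ t → v t = u₀ := by
    intro t ht
    have := constant_of_has_deriv_right_zero (f := v) (a := 0) (b := t)
      (hv_cont.mono Icc_subset_Ici_self) (fun x hx => hv x hx.1) t ⟨ht, le_rfl⟩
    rw [this]
    show u 0 * Real.exp (-∫ x in (0:ℝ)..(0:ℝ), g x) = u₀
    simp [h0]
  have hu_pos : ∀ t : ℝ, 0 ≤ t → 0 < u t := by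
    intro t ht
    have h1 : u t * Real.exp (-G t) = u₀ := hv_const t ht
    have h2 := Real.exp_pos (-G t)
    by_contra hle
    push_neg at hle
    nlinarith [hu₀.1]
  -- main argument
  by_contra hcon
  push_neg at hcon
  obtain ⟨t₀, ht₀, hut₀⟩ := hcon
  set S : Set ℝ := {t | 0 ≤ t ∧ 1 ≤ u t} with hSdef
  have hSne : S.Nonempty := ⟨t₀, ht₀, hut₀⟩
  have hSbdd : BddBelow S := ⟨0, fun x hx => hx.1⟩
  set T : ℝ := sInf S with hTdef
  have hT0 : 0 ≤ T := le_csInf hSne (fun x hx => hx.1)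
  have hTcl : T ∈ closure S := csInf_mem_closure hSne hSbdd
  have hTub : 1 ≤ u T := by
    have hne : (𝓝[S] T).NeBot := mem_closure_iff_nhdsWithin_neBot.1 hTcl
    have htend : Tendsto u (𝓝[S] T) (𝓝 (u T)) :=
      (hcontAt T hT0).tendsto.mono_left nhdsWithin_le_nhds
    refine ge_of_tendsto htend ?_
    exact eventually_mem_nhdsWithin.mono (fun x hx => hx.2)
  have hTpos : 0 < T := by
    rcases eq_or_lt_of_le hT0 with h | h
    · exfalso; rw [← h, h0] at hTub; linarith [hu₀.2]
    · exact h
  have hlt : ∀ t : ℝ, 0 ≤ t → t < T → u t < 1 := by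
    intro t ht htT
    by_contra h
    push_neg at h
    exact absurd (csInf_le hSbdd ⟨ht, h⟩) (not_le.2 htT)
  have hUT : u T = 1 := by
    refine le_antisymm ?_ hTub
    have htend : Tendsto u (𝓝[<] T) (𝓝 (u T)) :=
      (hcontAt T hT0).tendsto.mono_left nhdsWithin_le_nhds
    refine le_of_tendsto htend ?_
    filter_upwards [self_mem_nhdsWithin,
      (eventually_gt_nhds hTpos).filter_mono nhdsWithin_le_nhds] with x hx hx0
    exact (hlt x hx0.le hx).le
  obtain ⟨d, hd, heq⟩ := hode T hT0
  have hFTpos : 0 < F T := by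
    refine intervalIntegral_pos_of_pos_on (hFint T hT0) ?_ hTpos
    intro x hx
    exact hu_pos x hx.1.le
  have hdneg : d < 0 := by
    have h2 : κ * d = -F T := by
      show κ * d = -(∫ x in (0:ℝ)..T, u x)
      rw [hUT] at heq
      linarith [heq]
    nlinarith
  -- slope argument: d must be ≥ 0 since u t < 1 = u T for t < T
  have hslope : Tendsto (slope u T) (𝓝[<] T) (𝓝 d) := by
    have h := hd.hasDerivWithinAt (s := Iio T)
    rwa [hasDerivWithinAt_iff_tendsto_slope' (by simp)] at h
  have hd0 : 0 ≤ d := by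
    refine ge_of_tendsto hslope ?_
    filter_upwards [self_mem_nhdsWithin,
      (eventually_gt_nhds hTpos).filter_mono nhdsWithin_le_nhds] with x hx hx0
    have hxlt : u x < 1 := hlt x hx0.le hx
    rw [slope_def_field]
    rw [div_nonneg_iff]
    right
    refine ⟨by rw [hUT]; linarith, sub_nonpos.2 (le_of_lt hx)⟩
  linarith
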